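/- Equivalently formulated as a quantum binomial identity: for all m, n ≥ 0, {2n+1}! · Σ_{k=0}^{m} (-1)^k [2m+1 choose k] [2m+n-2k+1 choose 2n+1] = {2m+1}! · Σ_{k=0}^{n} (-1)^k [2n+1 choose k] [2n+m-2k+1 choose 2m+1]. -/

import Mathlib

open Finset LaurentPolynomial

noncomputable section

/-- `ℤ[q^{1/2}, q^{-1/2}]`, with `T 1` representing `q^{1/2}` (so `q = T 2`). -/
abbrev R : Type := LaurentPolynomial ℤ

/-- quantum integer `{i} = q^{i/2} - q^{-i/2}`. -/
def qint (i : ℤ) : R := T i - T (-i)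

/-- falling product `{i}_n = {i}{i-1}⋯{i-n+1}`. -/
def qfall (i : ℤ) (n : ℕ) : R := ∏ k ∈ Finset.range n, qint (i - k)

/-- quantum factorial `{n}! = {n}_n`. -/
def qfact (n : ℕ) : R := qfall n n

/-- balanced quantum binomial `[i choose n] = {i}_n / {n}!`,
defined inside `R` via the Pascal-type recursion
`[i+1 choose n+1] = q^{-(i-n)/2}[i choose n] + q^{(n+1)/2}[i choose n+1]`. -/
def qbinom : ℕ → ℕ → R
  | _, 0 => 1
  | 0, _ + 1 => 0
  | i + 1, n + 1 => T (-((i : ℤ) - n)) * qbinom i n + T ((n : ℤ) + 1) * qbinom i (n + 1)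

/-- `α_{m,n} = Σ_{k=0}^{m} (-1)^k [2m+1 choose k][2m+n-2k+1 choose 2n+1]`. -/
def qalpha (m n : ℕ) : R :=
  ∑ k ∈ Finset.range (m + 1),
    (-1 : R) ^ k * qbinom (2 * m + 1) k * qbinom (2 * m + n + 1 - 2 * k) (2 * n + 1)

/-- symmetric cyclotomic polynomial `Φ̃_l = q^{-φ(l)/2} Φ_l(q)
  = ∏_{d ∣ l} (q^{d/2} - q^{-d/2})^{μ(l/d)}`. -/
def qcyc (l : ℕ) : R :=
  T (-(Nat.totient l : ℤ)) *
    Polynomial.eval₂ (Int.castRingHom R) (T 2) (Polynomial.cyclotomic l ℤ)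

-- ===== auxiliary lemmas =====

lemma T_prod {ι : Type*} (s : Finset ι) (f : ι → ℤ) :
    (∏ i ∈ s, (T (f i) : R)) = T (∑ i ∈ s, f i) := by
  classical
  induction s using Finset.induction with
  | empty => simp
  | insert _ _ h ih => rw [Finset.prod_insert h, Finset.sum_insert h, T_add, ih]

lemma qint_zero : qint 0 = 0 := by simp [qint]

lemma T_ne_T {i j : ℤ} (h : i ≠ j) : (T i : R) ≠ T j := by
  intro he
  exact h (AddMonoidAlgebra.single_left_injective one_ne_zero he)

lemma qint_ne_zero {i : ℤ} (h : i ≠ 0) : qint i ≠ 0 := by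
  rw [qint, sub_ne_zero]
  exact T_ne_T (by omega)

lemma qfall_succ (a : ℤ) (n : ℕ) : qfall a (n+1) = qfall a n * qint (a - n) :=
  Finset.prod_range_succ _ _

lemma qfall_succ' (a : ℤ) (n : ℕ) : qfall a (n+1) = qint a * qfall (a-1) n := by
  rw [qfall, Finset.prod_range_succ', mul_comm]
  congr 1
  · congr 1; simp
  · rw [qfall]
    exact Finset.prod_congr rfl fun k _ => by congr 1; push_cast; ring

lemma qfact_succ (n : ℕ) : qfact (n+1) = qint ((n:ℤ)+1) * qfact n := by
  rw [qfact, qfact, show (((n:ℕ)+1 : ℕ) : ℤ) = (n:ℤ)+1 by push_cast; ring, qfall_succ']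
  congr 2
  ring

lemma qfact_ne_zero (n : ℕ) : qfact n ≠ 0 := by
  induction n with
  | zero => simp [qfact, qfall]
  | succ n ih =>
      rw [qfact_succ]
      exact mul_ne_zero (qint_ne_zero (by omega)) ih

lemma T_mul_qint (c i : ℤ) : (T c : R) * qint i = T (c+i) - T (c-i) := by
  rw [qint, mul_sub, ← T_add, ← T_add, sub_eq_add_neg c i]

lemma key_T (i n : ℕ) :
    T (-((i:ℤ) - n)) * qint ((n:ℤ)+1) + T ((n:ℤ)+1) * qint ((i:ℤ)-n) = qint ((i:ℤ)+1) := by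
  rw [T_mul_qint, T_mul_qint, qint,
    show -((i:ℤ) - ↑n) + (↑n + 1) = 2*(n:ℤ) + 1 - ↑i by ring,
    show -((i:ℤ) - ↑n) - (↑n + 1) = -((i:ℤ) + 1) by ring,
    show (n:ℤ) + 1 + ((i:ℤ) - ↑n) = (i:ℤ) + 1 by ring,
    show (n:ℤ) + 1 - ((i:ℤ) - ↑n) = 2*(n:ℤ) + 1 - ↑i by ring]
  ring

lemma qbinom_mul_qfact (i : ℕ) : ∀ n, qbinom i n * qfact n = qfall i n := by
  induction i with
  | zero =>
      intro n
      cases n with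
      | zero => simp [qbinom, qfact, qfall]
      | succ n =>
          show (0:R) * _ = _
          rw [zero_mul, show ((0:ℕ):ℤ) = 0 from rfl, qfall_succ', qint_zero, zero_mul]
  | succ i ih =>
      intro n
      cases n with
      | zero => simp [qbinom, qfact, qfall]
      | succ n =>
          show (T (-((i:ℤ) - n)) * qbinom i n + T ((n:ℤ) + 1) * qbinom i (n + 1)) *
              qfact (n+1) = qfall ((i:ℕ)+1 : ℕ) (n+1)
          have e1 := ih n
          have e2 : qbinom i (n+1) * (qint ((n:ℤ)+1) * qfact n) = qfall i (n+1) := by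
            rw [← qfact_succ]; exact ih (n+1)
          have hsucc : qfall (i:ℤ) (n+1) = qfall (i:ℤ) n * qint ((i:ℤ) - n) :=
            qfall_succ _ _
          have hkey := key_T i n
          have hr : qfall (((i:ℕ)+1 : ℕ) : ℤ) (n+1) = qint ((i:ℤ)+1) * qfall (i:ℤ) n := by
            rw [show (((i:ℕ)+1 : ℕ) : ℤ) = (i:ℤ)+1 by push_cast; ring, qfall_succ']
            congr 2
            ring
          rw [qfact_succ, hr]
          linear_combination (T (-((i:ℤ) - n)) * qint ((n:ℤ)+1)) * e1 +
            T ((n:ℤ)+1) * e2 + T ((n:ℤ)+1) * hsucc + qfall (i:ℤ) n * hkey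

lemma qbinom_eq_zero {i n : ℕ} (h : i < n) : qbinom i n = 0 := by
  have h1 := qbinom_mul_qfact i n
  have h2 : qfall (i:ℤ) n = 0 := by
    have : (i:ℕ) ∈ Finset.range n := Finset.mem_range.mpr h
    rw [qfall]
    exact Finset.prod_eq_zero this (by rw [sub_self, qint_zero])
  rw [h2] at h1
  exact (mul_eq_zero.mp h1).resolve_right (qfact_ne_zero n)

lemma qfall_mul {i n : ℕ} (h : n ≤ i) : qfall i n * qfact (i-n) = qfact i := by
  have hi : i = n + (i - n) := by omega
  rw [qfact, qfact]
  conv_rhs => rw [qfall, hi, Finset.prod_range_add]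
  rw [qfall, qfall]
  congr 1
  · exact Finset.prod_congr rfl fun k _ => by congr 1; omega
  · exact Finset.prod_congr rfl fun k _ => by congr 1; omega

lemma qbinom_symm {i k : ℕ} (h : k ≤ i) : qbinom i (i - k) = qbinom i k := by
  have h1 : qbinom i (i-k) * (qfact (i-k) * qfact k) = qfact i := by
    rw [← mul_assoc, qbinom_mul_qfact]
    have hk : k = i - (i - k) := by omega
    calc qfall (i:ℤ) (i-k) * qfact k = qfall (i:ℤ) (i-k) * qfact (i - (i-k)) := by rw [← hk]
      _ = qfact i := qfall_mul (by omega)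
  have h2 : qbinom i k * (qfact (i-k) * qfact k) = qfact i := by
    rw [mul_comm (qfact (i-k)), ← mul_assoc, qbinom_mul_qfact]
    exact qfall_mul h
  have hne : qfact (i-k) * qfact k ≠ 0 := mul_ne_zero (qfact_ne_zero _) (qfact_ne_zero _)
  exact mul_right_cancel₀ hne (h1.trans h2.symm)

lemma qfall_reflect (b : ℤ) (n : ℕ) : qfall (2*(n:ℤ) - b) (2*n+1) = - qfall b (2*n+1) := by
  have h1 : ∀ j ∈ Finset.range (2*n+1),
      qint (2*(n:ℤ) - b - (j:ℤ)) = qint (((2*n+1-1-j : ℕ):ℤ) - b) := by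
    intro j hj
    have hj' : j ≤ 2*n := by simpa [Nat.lt_succ_iff] using Finset.mem_range.mp hj
    congr 1
    omega
  rw [qfall, Finset.prod_congr rfl h1,
    Finset.prod_range_reflect (fun j => qint ((j:ℤ) - b)) (2*n+1)]
  have h2 : ∀ j ∈ Finset.range (2*n+1), qint ((j:ℤ) - b) = - qint (b - j) := by
    intro j _
    rw [qint, qint]
    rw [show -((j:ℤ) - b) = b - j by ring, show -(b - (j:ℤ)) = (j:ℤ) - b by ring]
    ring
  have h3 : ∏ x ∈ Finset.range (2*n+1), -qint (b - (x:ℤ))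
      = (∏ _x ∈ Finset.range (2*n+1), (-1:R)) * ∏ x ∈ Finset.range (2*n+1), qint (b - (x:ℤ)) := by
    rw [← Finset.prod_mul_distrib]
    exact Finset.prod_congr rfl fun x _ => by ring
  rw [Finset.prod_congr rfl h2, h3, Finset.prod_const, Finset.card_range, qfall]
  have h4 : (-1:R)^(2*n+1) = -1 := Odd.neg_one_pow ⟨n, by ring⟩
  rw [h4]
  ring

-- balanced q-binomial theorem
lemma qbt (N : ℕ) (Z : R) : ∀ t : R,
    ∏ j ∈ range N, (Z + t * T ((N:ℤ) - 1 - 2*j)) =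
      ∑ r ∈ range (N+1), qbinom N r * Z^(N-r) * t^r := by
  induction N with
  | zero => intro t; simp [qbinom]
  | succ N ih =>
      intro t
      have h1 : ∀ j ∈ range N,
          Z + t * T (((N+1:ℕ):ℤ) - 1 - 2*j) = Z + (t * T 1) * T ((N:ℤ) - 1 - 2*j) := by
        intro j _
        have hT : (T (((N+1:ℕ):ℤ) - 1 - 2*(j:ℤ)) : R) = T 1 * T ((N:ℤ) - 1 - 2*j) := by
          rw [← T_add]; congr 1; push_cast; ring
        rw [hT, mul_assoc]
      rw [Finset.prod_range_succ, Finset.prod_congr rfl h1, ih (t * T 1),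
        show (((N:ℕ)+1:ℕ):ℤ) - 1 - 2*(N:ℕ) = -(N:ℤ) by push_cast; ring]
      have lhs_eq : (∑ r ∈ range (N+1), qbinom N r * Z^(N-r) * (t * T 1)^r) * (Z + t * T (-(N:ℤ)))
          = (∑ r ∈ range (N+1), qbinom N r * T (r:ℤ) * Z^(N+1-r) * t^r)
            + (∑ r ∈ range (N+1), qbinom N r * T ((r:ℤ) - N) * Z^(N-r) * t^(r+1)) := by
        rw [mul_add, Finset.sum_mul, Finset.sum_mul]
        congr 1
        · refine Finset.sum_congr rfl fun r hr => ?_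
          have hr' : r ≤ N := by simpa [Nat.lt_succ_iff] using Finset.mem_range.mp hr
          rw [mul_pow, T_pow, mul_one,
            show N + 1 - r = (N - r) + 1 by omega, pow_succ]
          ring
        · refine Finset.sum_congr rfl fun r hr => ?_
          rw [mul_pow, T_pow, mul_one, show T ((r:ℤ) - N) = (T (r:ℤ) * T (-(N:ℤ)) : R) by
            rw [← T_add]; congr 1; (try ring), pow_succ]
          all_goals ring
      rw [lhs_eq]
      -- now handle RHS
      rw [Finset.sum_range_succ' (fun r => qbinom (N+1) r * Z^(N+1-r) * t^r) (N+1)]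
      have hsplit : ∀ r ∈ range (N+1),
          qbinom (N+1) (r+1) * Z^(N+1-(r+1)) * t^(r+1)
          = qbinom N r * T ((r:ℤ) - N) * Z^(N-r) * t^(r+1)
            + qbinom N (r+1) * T ((r:ℤ)+1) * Z^(N-r) * t^(r+1) := by
        intro r _
        show (T (-((N:ℤ) - r)) * qbinom N r + T ((r:ℤ) + 1) * qbinom N (r+1)) *
            Z^(N+1-(r+1)) * t^(r+1) = _
        rw [show N+1-(r+1) = N-r by omega, show -((N:ℤ) - r) = (r:ℤ) - N by ring]
        ring
      rw [Finset.sum_congr rfl hsplit, Finset.sum_add_distrib]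
      have hA : (∑ r ∈ range (N+1), qbinom N (r+1) * T ((r:ℤ)+1) * Z^(N-r) * t^(r+1))
          + qbinom (N+1) 0 * Z^(N+1-0) * t^0
          = ∑ r ∈ range (N+1), qbinom N r * T (r:ℤ) * Z^(N+1-r) * t^r := by
        have e0 : (qbinom (N+1) 0 * Z^(N+1-0) * t^0 : R)
            = qbinom N 0 * T ((0:ℕ):ℤ) * Z^(N+1-0) * t^0 := by
          norm_num [qbinom, T_zero]
        rw [e0]
        have hstep : ∀ r ∈ range (N+1),
            qbinom N (r+1) * T ((r:ℤ)+1) * Z^(N-r) * t^(r+1)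
            = qbinom N (r+1) * T (((r+1:ℕ):ℤ)) * Z^(N+1-(r+1)) * t^(r+1) := by
          intro r _
          rw [show N+1-(r+1) = N-r by omega,
            show (((r:ℕ)+1:ℕ):ℤ) = (r:ℤ)+1 by push_cast; ring]
        rw [Finset.sum_congr rfl hstep,
          ← Finset.sum_range_succ' (fun r => qbinom N r * T (r:ℤ) * Z^(N+1-r) * t^r) (N+1),
          Finset.sum_range_succ]
        rw [qbinom_eq_zero (Nat.lt_succ_self N)]
        all_goals ring
      calc (∑ r ∈ range (N+1), qbinom N r * T (r:ℤ) * Z^(N+1-r) * t^r)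
            + (∑ r ∈ range (N+1), qbinom N r * T ((r:ℤ) - N) * Z^(N-r) * t^(r+1))
          = ((∑ r ∈ range (N+1), qbinom N (r+1) * T ((r:ℤ)+1) * Z^(N-r) * t^(r+1))
              + qbinom (N+1) 0 * Z^(N+1-0) * t^0)
            + (∑ r ∈ range (N+1), qbinom N r * T ((r:ℤ) - N) * Z^(N-r) * t^(r+1)) := by
              rw [hA]
        _ = (∑ r ∈ range (N+1), qbinom N r * T ((r:ℤ) - N) * Z^(N-r) * t^(r+1))
            + (∑ r ∈ range (N+1), qbinom N (r+1) * T ((r:ℤ)+1) * Z^(N-r) * t^(r+1))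
            + qbinom (N+1) 0 * Z^(N+1-0) * t^0 := by ring

lemma gauss (n : ℕ) : ∑ j ∈ range (2*n+1), (j:ℤ) = n*(2*n+1) := by
  have h := Finset.sum_range_id_mul_two (2*n+1)
  have h' : 2*n+1 - 1 = 2*n := by omega
  rw [h'] at h
  have h2 : (∑ j ∈ range (2*n+1), j) = n*(2*n+1) := by
    have he : (2*n+1)*(2*n) = (n*(2*n+1))*2 := by ring
    rw [he] at h
    exact Nat.eq_of_mul_eq_mul_right (by norm_num) h
  rw [← Nat.cast_sum, h2]
  push_cast; ring

lemma qfall_exp (a : ℤ) (N : ℕ) :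
    qfall a N = ∑ r ∈ range (N+1),
      qbinom N r * (-1)^(N-r) *
        T ((∑ j ∈ range N, ((j:ℤ) - a)) + r * (2*a - N + 1)) := by
  have h1 : qfall a N = (∏ j ∈ range N, (T ((j:ℤ) - a) : R)) *
      ∏ j ∈ range N, ((-1) + T (2*a - (N:ℤ) + 1) * T ((N:ℤ) - 1 - 2*j)) := by
    rw [qfall, ← Finset.prod_mul_distrib]
    refine Finset.prod_congr rfl fun j hj => ?_
    rw [mul_add, mul_neg_one, ← T_add, ← T_add, qint,
      show (j:ℤ) - a + (2*a - (N:ℤ) + 1 + ((N:ℤ) - 1 - 2*j)) = a - j by ring,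
      show -(a - (j:ℤ)) = (j:ℤ) - a by ring]
    ring
  rw [h1, T_prod, qbt N (-1) (T (2*a - (N:ℤ) + 1)), Finset.mul_sum]
  refine Finset.sum_congr rfl fun r hr => ?_
  rw [T_pow, T_add]
  push_cast
  ring

lemma negpow_odd {a k : ℕ} (h : k ≤ a) (ha : Odd a) : (-1:R)^(a - k) = -(-1:R)^k := by
  rcases Nat.even_or_odd k with hk | hk
  · have h1 : Odd (a - k) := Nat.Odd.sub_even h ha hk
    rw [h1.neg_one_pow, hk.neg_one_pow]
  · have h1 : Even (a - k) := Nat.Odd.sub_odd ha hk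
    rw [h1.neg_one_pow, hk.neg_one_pow, neg_neg]

lemma pairing (m n : ℕ) :
    (2:R) * (qfact (2*n+1) * ∑ k ∈ range (m+1),
        (-1:R)^k * qbinom (2*m+1) k * qbinom (2*m+n+1-2*k) (2*n+1))
    = ∑ k ∈ range (2*m+2), (-1:R)^k * qbinom (2*m+1) k *
        qfall (2*(m:ℤ)+(n:ℤ)+1-2*(k:ℤ)) (2*n+1) := by
  set f : ℕ → R := fun k => (-1:R)^k * qbinom (2*m+1) k *
    qfall (2*(m:ℤ)+(n:ℤ)+1-2*(k:ℤ)) (2*n+1) with hf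
  have hL : qfact (2*n+1) * ∑ k ∈ range (m+1),
      (-1:R)^k * qbinom (2*m+1) k * qbinom (2*m+n+1-2*k) (2*n+1)
      = ∑ k ∈ range (m+1), f k := by
    rw [Finset.mul_sum]
    refine Finset.sum_congr rfl fun k hk => ?_
    have hk' : k ≤ m := by simpa [Nat.lt_succ_iff] using Finset.mem_range.mp hk
    simp only [hf]
    have : qbinom (2*m+n+1-2*k) (2*n+1) * qfact (2*n+1)
        = qfall ((2*m+n+1-2*k : ℕ) : ℤ) (2*n+1) := qbinom_mul_qfact _ _
    have hcast : ((2*m+n+1-2*k : ℕ) : ℤ) = 2*(m:ℤ)+(n:ℤ)+1-2*(k:ℤ) := by omega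
    rw [hcast] at this
    rw [← this]
    ring
  have hR : ∑ k ∈ range (2*m+2), f k = 2 * ∑ k ∈ range (m+1), f k := by
    rw [show 2*m+2 = (m+1)+(m+1) by omega, Finset.sum_range_add]
    have hrefl := Finset.sum_range_reflect (fun j => f (m+1+j)) (m+1)
    have h2 : ∀ k ∈ range (m+1), f (m+1+(m+1-1-k)) = f k := by
      intro k hk
      have hk' : k ≤ m := by simpa [Nat.lt_succ_iff] using Finset.mem_range.mp hk
      have hidx : m+1+(m+1-1-k) = (2*m+1) - k := by omega
      rw [hidx]
      simp only [hf]
      have hb : (-1:R)^(2*m+1-k) = -(-1:R)^k := negpow_odd (by omega) ⟨m, by ring⟩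
      have hbin : qbinom (2*m+1) (2*m+1-k) = qbinom (2*m+1) k := qbinom_symm (by omega)
      have harg : 2*(m:ℤ)+(n:ℤ)+1-2*((2*m+1-k : ℕ):ℤ)
          = 2*(n:ℤ) - (2*(m:ℤ)+(n:ℤ)+1-2*(k:ℤ)) := by omega
      rw [hb, hbin, harg, qfall_reflect]
      ring
    rw [← hrefl, Finset.sum_congr rfl h2, two_mul]
  rw [hL, hR]

-- the grand expansion
lemma expand (m n : ℕ) :
    (∑ k ∈ range (2*m+2), (-1:R)^k * qbinom (2*m+1) k *
        qfall (2*(m:ℤ)+(n:ℤ)+1-2*(k:ℤ)) (2*n+1))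
    = ∑ k ∈ range (2*m+2), ∑ r ∈ range (2*n+2),
        (-1:R)^(k+(2*n+1-r)) * qbinom (2*m+1) k * qbinom (2*n+1) r *
          T ((2*(r:ℤ)-2*(n:ℤ)-1)*(2*(m:ℤ)+1-2*(k:ℤ))) := by
  refine Finset.sum_congr rfl fun k hk => ?_
  rw [qfall_exp, Finset.mul_sum]
  refine Finset.sum_congr (by norm_num) fun r hr => ?_
  have hE : (∑ j ∈ range (2*n+1), ((j:ℤ) - (2*(m:ℤ)+(n:ℤ)+1-2*(k:ℤ))))
      + (r:ℤ) * (2*(2*(m:ℤ)+(n:ℤ)+1-2*(k:ℤ)) - ((2*n+1 : ℕ):ℤ) + 1)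
      = (2*(r:ℤ)-2*(n:ℤ)-1)*(2*(m:ℤ)+1-2*(k:ℤ)) := by
    rw [Finset.sum_sub_distrib, gauss, Finset.sum_const, Finset.card_range]
    push_cast
    ring
  rw [hE, pow_add]
  ring

lemma negpow_congr {a b : ℕ} (h : a % 2 = b % 2) : (-1:R)^a = (-1:R)^b := by
  rcases Nat.even_or_odd a with ha | ha
  · have ha' := Nat.even_iff.mp ha
    rw [ha.neg_one_pow, Even.neg_one_pow (Nat.even_iff.mpr (by omega))]
  · have ha' := Nat.odd_iff.mp ha
    rw [ha.neg_one_pow, Odd.neg_one_pow (Nat.odd_iff.mpr (by omega))]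


/-- The symmetry as an explicit quantum binomial identity. -/
theorem stmt_9 (m n : ℕ) :
    qfact (2 * n + 1) *
      ∑ k ∈ Finset.range (m + 1),
        (-1 : R) ^ k * qbinom (2 * m + 1) k * qbinom (2 * m + n + 1 - 2 * k) (2 * n + 1)
    = qfact (2 * m + 1) *
      ∑ k ∈ Finset.range (n + 1),
        (-1 : R) ^ k * qbinom (2 * n + 1) k * qbinom (2 * n + m + 1 - 2 * k) (2 * m + 1) := by
  have h2 : (2:R) ≠ 0 := by
    have h : (Polynomial.toLaurent (2 : Polynomial ℤ)) = (2:R) := map_ofNat _ 2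
    rw [← h, Polynomial.toLaurent_ne_zero]
    exact two_ne_zero
  apply mul_left_cancel₀ h2
  rw [pairing m n, pairing n m, expand m n, expand n m, Finset.sum_comm]
  refine Finset.sum_congr rfl fun r hr => Finset.sum_congr rfl fun k hk => ?_
  have hr' : r ≤ 2*n+1 := by simpa [Nat.lt_succ_iff] using Finset.mem_range.mp hr
  have hk' : k ≤ 2*m+1 := by simpa [Nat.lt_succ_iff] using Finset.mem_range.mp hk
  have hsgn : (-1:R)^(k+(2*n+1-r)) = (-1:R)^(r+(2*m+1-k)) := negpow_congr (by omega)
  rw [hsgn,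
    show ((2*(r:ℤ)-2*(n:ℤ)-1)*(2*(m:ℤ)+1-2*(k:ℤ)))
      = (2*(k:ℤ)-2*(m:ℤ)-1)*(2*(n:ℤ)+1-2*(r:ℤ)) by ring]
  ring
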